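/- Let T be a {1,3}-tree with edge set E, let X_T be its set of leaf-edges, and let X ⊆ X_T with |X| even. Then there exists a unique point x ∈ P_T such that x_e = 1/2 for e ∈ X and x_e = 0 for e ∈ X_T \ X; moreover all coordinates of x lie in {0, 1/2} and its support is the edge set of a collection of disjoint leaf-paths of T. -/

import Mathlib

open Finset
open scoped Classical

noncomputable section

/-- The Liu–Osserman polytope `P_T` of a `{1,3}`-graph, as a subset of `ℝ^{Sym2 V}`
supported on the edges of `T`: at each internal (degree-3) node with incident edges
`a, b, c` the triangle inequalities `w_a ≤ w_b + w_c` (in all three versions) and the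
perimeter inequality `w_a + w_b + w_c ≤ 1` hold, and `0 ≤ w_e ≤ 1/2` for any edge both
of whose endpoints are leaves. -/
def memP {V : Type*} [Fintype V] [DecidableEq V] (T : SimpleGraph V) [DecidableRel T.Adj]
    (w : Sym2 V → ℝ) : Prop :=
  (∀ e, e ∉ T.edgeSet → w e = 0) ∧
  (∀ v : V, T.degree v = 3 →
    (∀ a ∈ T.incidenceFinset v, w a ≤ ∑ b ∈ (T.incidenceFinset v).erase a, w b) ∧
    ∑ a ∈ T.incidenceFinset v, w a ≤ 1) ∧
  (∀ e ∈ T.edgeSet, (∀ v ∈ e, T.degree v = 1) → 0 ≤ w e ∧ w e ≤ 1 / 2)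

/-- `H` is (the edge set of) a collection of pairwise disjoint leaf-paths of the
`{1,3}`-tree `T`: a set of edges in which every internal (degree-3) node of `T` has
degree `0` or `2` (an internally Eulerian subgraph of a tree). -/
def isLeafPathCollection {V : Type*} [Fintype V] [DecidableEq V] (T : SimpleGraph V)
    [DecidableRel T.Adj] (H : Finset (Sym2 V)) : Prop :=
  H ⊆ T.edgeFinset ∧
  ∀ v : V, T.degree v = 3 →
    (H.filter (fun e => v ∈ e)).card = 0 ∨ (H.filter (fun e => v ∈ e)).card = 2

/-- The leaf-edges of `T`: edges incident to a degree-1 vertex. -/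
def leafEdges {V : Type*} [Fintype V] [DecidableEq V] (T : SimpleGraph V)
    [DecidableRel T.Adj] : Finset (Sym2 V) :=
  T.edgeFinset.filter (fun e => ∃ v ∈ e, T.degree v = 1)



open Finset
open scoped Classical


namespace LOaux

variable {V : Type*}

/-- Walk induction for sets closed under adjacency. -/
lemma reach_mem_closed {G : SimpleGraph V} {S : Set V}
    (hS : ∀ a b, G.Adj a b → a ∈ S → b ∈ S) {u w : V} (h : G.Reachable u w) :
    u ∈ S → w ∈ S := by
  obtain ⟨p⟩ := h
  induction p with
  | nil => exact id
  | cons h q ih => exact fun hu => ih (hS _ _ h hu)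

lemma not_reach_del {G : SimpleGraph V} (hacyc : G.IsAcyclic) {u v : V} (h : G.Adj u v) :
    ¬ (G.deleteEdges {s(u,v)}).Reachable u v := by
  have hb := (SimpleGraph.isAcyclic_iff_forall_adj_isBridge.mp hacyc) h
  exact SimpleGraph.isBridge_iff.mp hb

/-- Everything is on one of the two sides of an edge. -/
lemma side_cover {G : SimpleGraph V} (hconn : G.Connected) {u v : V} (h : G.Adj u v) (w : V) :
    (G.deleteEdges {s(u,v)}).Reachable u w ∨ (G.deleteEdges {s(u,v)}).Reachable v w := by
  have hclosed : ∀ a b, G.Adj a b →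
      a ∈ {x | (G.deleteEdges {s(u,v)}).Reachable u x ∨ (G.deleteEdges {s(u,v)}).Reachable v x} →
      b ∈ {x | (G.deleteEdges {s(u,v)}).Reachable u x ∨ (G.deleteEdges {s(u,v)}).Reachable v x} := by
    intro a b hab ha
    by_cases he : s(a,b) = s(u,v)
    · rw [Sym2.eq_iff] at he
      rcases he with ⟨rfl, rfl⟩ | ⟨rfl, rfl⟩
      · exact Or.inr (SimpleGraph.Reachable.refl _)
      · exact Or.inl (SimpleGraph.Reachable.refl _)
    · have hab' : (G.deleteEdges {s(u,v)}).Adj a b := by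
        rw [SimpleGraph.deleteEdges_adj]; exact ⟨hab, by simpa using he⟩
      rcases ha with ha | ha
      · exact Or.inl (ha.trans hab'.reachable)
      · exact Or.inr (ha.trans hab'.reachable)
  exact reach_mem_closed hclosed (hconn.preconnected u w) (Or.inl (SimpleGraph.Reachable.refl _))

lemma side_disj {G : SimpleGraph V} (hacyc : G.IsAcyclic) {u v : V} (h : G.Adj u v) (w : V) :
    ¬ ((G.deleteEdges {s(u,v)}).Reachable u w ∧ (G.deleteEdges {s(u,v)}).Reachable v w) := by
  rintro ⟨h1, h2⟩
  exact not_reach_del hacyc h (h1.trans h2.symm)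

end LOaux

open Finset
open scoped Classical


namespace LOaux2

variable {V : Type*} [Fintype V] [DecidableEq V]

def leafEdges' (T : SimpleGraph V) [DecidableRel T.Adj] : Finset (Sym2 V) :=
  T.edgeFinset.filter (fun e => ∃ v ∈ e, T.degree v = 1)

/-- `w` is a leaf of `T` whose edge is in `X`. -/
def XLeaf (T : SimpleGraph V) [DecidableRel T.Adj] (X : Finset (Sym2 V)) (w : V) : Prop :=
  T.degree w = 1 ∧ ∃ f ∈ X, w ∈ f

/-- number of X-leaves on the `u`-side of edge `e`. -/
def sideN (T : SimpleGraph V) [DecidableRel T.Adj] (X : Finset (Sym2 V)) (u : V) (e : Sym2 V) : ℕ :=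
  (univ.filter (fun w => (T.deleteEdges {e}).Reachable u w ∧ XLeaf T X w)).card

def totalN (T : SimpleGraph V) [DecidableRel T.Adj] (X : Finset (Sym2 V)) : ℕ :=
  (univ.filter (XLeaf T X)).card

variable {T : SimpleGraph V} [DecidableRel T.Adj]

lemma degree_one_incidence {u : V} (hu : T.degree u = 1) {e f : Sym2 V}
    (he : e ∈ T.incidenceFinset u) (hf : f ∈ T.incidenceFinset u) : e = f := by
  have hcard : (T.incidenceFinset u).card ≤ 1 := by
    rw [T.card_incidenceFinset_eq_degree, hu]
  exact Finset.card_le_one.mp hcard e he f hf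

lemma leaf_side {u v : V} (hu : T.degree u = 1) (h : T.Adj u v) {w : V}
    (hr : (T.deleteEdges {s(u,v)}).Reachable u w) : w = u := by
  have hclosed : ∀ a b, (T.deleteEdges {s(u,v)}).Adj a b → a ∈ ({u} : Set V) → b ∈ ({u} : Set V) := by
    rintro a b hab rfl
    rw [SimpleGraph.deleteEdges_adj] at hab
    exfalso
    apply hab.2
    have h1 : s(a,b) ∈ T.incidenceFinset a := by
      rw [SimpleGraph.mem_incidenceFinset]
      exact ⟨T.mem_edgeSet.mpr hab.1, Sym2.mem_mk_left a b⟩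
    have h2 : s(a,v) ∈ T.incidenceFinset a := by
      rw [SimpleGraph.mem_incidenceFinset]
      exact ⟨T.mem_edgeSet.mpr h, Sym2.mem_mk_left a v⟩
    simpa using degree_one_incidence hu h1 h2
  have : w ∈ ({u} : Set V) := LOaux.reach_mem_closed hclosed hr rfl
  exact this
  

lemma sideN_add (hconn : T.Connected) (hacyc : T.IsAcyclic) {u v : V} (h : T.Adj u v)
    (X : Finset (Sym2 V)) :
    sideN T X u s(u,v) + sideN T X v s(u,v) = totalN T X := by
  have hdisj : Disjoint
      (univ.filter (fun w => (T.deleteEdges {s(u,v)}).Reachable u w ∧ XLeaf T X w))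
      (univ.filter (fun w => (T.deleteEdges {s(u,v)}).Reachable v w ∧ XLeaf T X w)) := by
    rw [Finset.disjoint_left]
    intro w hw1 hw2
    rw [mem_filter] at hw1 hw2
    exact LOaux.side_disj hacyc h w ⟨hw1.2.1, hw2.2.1⟩
  rw [sideN, sideN, ← Finset.card_union_of_disjoint hdisj]
  congr 1
  rw [← Finset.filter_or]
  apply Finset.filter_congr
  intro w _
  constructor
  · rintro (⟨_, hp⟩ | ⟨_, hp⟩) <;> exact hp
  · intro hp
    rcases LOaux.side_cover hconn h w with hr | hr
    · exact Or.inl ⟨hr, hp⟩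
    · exact Or.inr ⟨hr, hp⟩

lemma sideN_leaf {u v : V} (hu : T.degree u = 1) (h : T.Adj u v)
    {X : Finset (Sym2 V)} (hX : X ⊆ T.edgeFinset) :
    sideN T X u s(u,v) = if s(u,v) ∈ X then 1 else 0 := by
  have hxl : XLeaf T X u ↔ s(u,v) ∈ X := by
    constructor
    · rintro ⟨_, f, hfX, hf⟩
      have h1 : f ∈ T.incidenceFinset u := by
        rw [SimpleGraph.mem_incidenceFinset]
        exact ⟨SimpleGraph.mem_edgeFinset.mp (hX hfX), hf⟩
      have h2 : s(u,v) ∈ T.incidenceFinset u := by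
        rw [SimpleGraph.mem_incidenceFinset]
        exact ⟨T.mem_edgeSet.mpr h, Sym2.mem_mk_left u v⟩
      rwa [degree_one_incidence hu h1 h2] at hfX
    · intro hX'
      exact ⟨hu, s(u,v), hX', Sym2.mem_mk_left u v⟩
  have hfe : (univ.filter (fun w => (T.deleteEdges {s(u,v)}).Reachable u w ∧ XLeaf T X w))
      = if s(u,v) ∈ X then {u} else ∅ := by
    ext w
    rw [mem_filter]
    by_cases hx : s(u,v) ∈ X <;> simp only [hx, if_true, if_false, mem_singleton, notMem_empty,
      iff_false, mem_univ, true_and]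
    · constructor
      · rintro ⟨hr, _⟩
        exact leaf_side hu h hr
      · rintro rfl
        exact ⟨SimpleGraph.Reachable.refl _, hxl.mpr hx⟩
    · rintro ⟨hr, hxw⟩
      have := leaf_side hu h hr
      subst this
      exact hx (hxl.mp hxw)
  rw [sideN, hfe]
  by_cases hx : s(u,v) ∈ X <;> simp [hx]

lemma totalN_even (hconn : T.Connected) {X : Finset (Sym2 V)} (hX : X ⊆ leafEdges' T)
    (hXeven : Even X.card) : Even (totalN T X) := by
  -- no edge of X has two leaf endpoints
  have hone : ∀ f ∈ X, ∀ p q : V, f = s(p,q) → T.degree p = 1 → T.degree q = 1 → False := by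
    intro f hfX p q hf hp hq
    subst hf
    have hadj : T.Adj p q := by
      have := hX hfX
      rw [leafEdges', mem_filter, SimpleGraph.mem_edgeFinset] at this
      exact T.mem_edgeSet.mp this.1
    -- every vertex is p or q
    have hpq : ∀ w : V, w ∈ ({p, q} : Set V) := by
      intro w
      have hclosed : ∀ a b, T.Adj a b → a ∈ ({p, q} : Set V) → b ∈ ({p, q} : Set V) := by
        rintro a b hab (rfl | rfl)
        · have h1 : s(a,b) ∈ T.incidenceFinset a := by
            rw [SimpleGraph.mem_incidenceFinset]; exact ⟨T.mem_edgeSet.mpr hab, Sym2.mem_mk_left a b⟩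
          have h2 : s(a,q) ∈ T.incidenceFinset a := by
            rw [SimpleGraph.mem_incidenceFinset]; exact ⟨T.mem_edgeSet.mpr hadj, Sym2.mem_mk_left a q⟩
          have := degree_one_incidence hp h1 h2
          rw [Sym2.congr_right] at this
          exact Or.inr this
        · have h1 : s(a,b) ∈ T.incidenceFinset a := by
            rw [SimpleGraph.mem_incidenceFinset]; exact ⟨T.mem_edgeSet.mpr hab, Sym2.mem_mk_left a b⟩
          have h2 : s(a,p) ∈ T.incidenceFinset a := by
            rw [SimpleGraph.mem_incidenceFinset]
            exact ⟨T.mem_edgeSet.mpr hadj.symm, Sym2.mem_mk_left a p⟩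
          have := degree_one_incidence hq h1 h2
          rw [Sym2.congr_right] at this
          exact Or.inl this
      exact LOaux.reach_mem_closed hclosed (hconn.preconnected p w) (Or.inl rfl)
    -- so every edge equals s(p,q), hence X ⊆ {s(p,q)}
    have hXsub : X ⊆ {s(p,q)} := by
      intro g hg
      have hge : g ∈ T.edgeSet := by
        have := hX hg
        rw [leafEdges', mem_filter, SimpleGraph.mem_edgeFinset] at this
        exact this.1
      induction g with
      | _ x y =>
        rw [mem_singleton]
        have hxy : T.Adj x y := T.mem_edgeSet.mp hge
        have hx := hpq x
        have hy := hpq y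
        rcases hx with rfl | rfl <;> rcases hy with rfl | rfl
        · exact absurd rfl hxy.ne
        · rfl
        · exact Sym2.eq_swap
        · exact absurd rfl hxy.ne
    have h1 : X.card = 1 := le_antisymm (by simpa using Finset.card_le_card hXsub)
      (Finset.card_pos.mpr ⟨_, hfX⟩)
    rw [h1] at hXeven
    simp at hXeven
  -- bijection between X-leaves and X
  have hbij : totalN T X = X.card := by
    apply Finset.card_bij (fun w hw => ((mem_filter.mp hw).2.2).choose)
    · intro w hw
      exact ((mem_filter.mp hw).2.2).choose_spec.1
    · intro w1 hw1 w2 hw2 heq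
      by_contra hne
      have hs1 := ((mem_filter.mp hw1).2.2).choose_spec
      have hs2 := ((mem_filter.mp hw2).2.2).choose_spec
      have hd1 := (mem_filter.mp hw1).2.1
      have hd2 := (mem_filter.mp hw2).2.1
      set f := ((mem_filter.mp hw1).2.2).choose
      have hw2f : w2 ∈ f := heq ▸ hs2.2
      have hfeq : f = s(w1, w2) :=
        (Sym2.mem_and_mem_iff hne).mp ⟨hs1.2, hw2f⟩
      exact hone f hs1.1 w1 w2 hfeq hd1 hd2
    · intro f hfX
      -- f has a degree-1 endpoint
      have hf := hX hfX
      rw [leafEdges', mem_filter] at hf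
      obtain ⟨hfE, w, hwf, hw1⟩ := hf
      have hwmem : w ∈ univ.filter (XLeaf T X) := by
        rw [mem_filter]
        exact ⟨mem_univ _, hw1, f, hfX, hwf⟩
      refine ⟨w, hwmem, ?_⟩
      -- chosen edge equals f by uniqueness of incident edge
      have hs := ((mem_filter.mp hwmem).2.2).choose_spec
      have h1 : ((mem_filter.mp hwmem).2.2).choose ∈ T.incidenceFinset w := by
        rw [SimpleGraph.mem_incidenceFinset]
        have := hX hs.1
        rw [leafEdges', mem_filter, SimpleGraph.mem_edgeFinset] at this
        exact ⟨this.1, hs.2⟩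
      have h2 : f ∈ T.incidenceFinset w := by
        rw [SimpleGraph.mem_incidenceFinset]
        rw [SimpleGraph.mem_edgeFinset] at hfE
        exact ⟨hfE, hwf⟩
      exact degree_one_incidence hw1 h1 h2
  rw [hbij]
  exact hXeven

end LOaux2

open Finset LOaux LOaux2
open scoped Classical


namespace LOaux3

variable {V : Type*} [Fintype V] [DecidableEq V] {T : SimpleGraph V} [DecidableRel T.Adj]

/-- A walk on the far side of edge `s(v,b)` avoids `v`, so transfers to any graph
obtained by deleting an edge containing `v`. -/
lemma reach_transfer (hacyc : T.IsAcyclic) {v b : V} (hb : T.Adj v b) {w : V}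
    (hr : (T.deleteEdges {s(v,b)}).Reachable b w) (f : Sym2 V) (hf : v ∈ f) :
    (T.deleteEdges {f}).Reachable b w := by
  obtain ⟨p⟩ := hr
  have hvp : v ∉ p.support := by
    intro hv
    have : (T.deleteEdges {s(v,b)}).Reachable b v := ⟨p.takeUntil v hv⟩
    exact LOaux.not_reach_del hacyc hb this.symm
  have hedges : ∀ g ∈ p.edges, g ∈ (T.deleteEdges {f}).edgeSet := by
    intro g hg
    have hgE := p.edges_subset_edgeSet hg
    rw [SimpleGraph.edgeSet_deleteEdges] at hgE ⊢
    refine ⟨hgE.1, ?_⟩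
    simp only [Set.mem_singleton_iff]
    rintro rfl
    obtain ⟨u', rfl⟩ := Sym2.mem_iff_exists.mp hf
    exact hvp (p.fst_mem_support_of_mem_edges hg)
  exact ⟨p.transfer _ hedges⟩

lemma sideN_vertex (hconn : T.Connected) (hacyc : T.IsAcyclic) {v a b c : V}
    (ha : T.Adj v a) (hb : T.Adj v b) (hc : T.Adj v c)
    (hab : a ≠ b) (hac : a ≠ c) (hbc : b ≠ c)
    (hnbr : T.neighborFinset v = {a, b, c}) (X : Finset (Sym2 V)) :
    sideN T X v s(v,a) = sideN T X b s(v,b) + sideN T X c s(v,c) := by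
  have hdeg3 : T.degree v = 3 := by
    rw [SimpleGraph.degree, hnbr]
    rw [Finset.card_insert_of_notMem (by simp [hab, hac]),
      Finset.card_insert_of_notMem (by simp [hbc]), Finset.card_singleton]
  have hvnotX : ∀ X' : Finset (Sym2 V), ¬ XLeaf T X' v := by
    rintro X' ⟨h1, -⟩
    rw [hdeg3] at h1
    exact absurd h1 (by norm_num)
  have heab : s(v,a) ≠ s(v,b) := fun h => hab (Sym2.congr_right.mp h)
  have heac : s(v,a) ≠ s(v,c) := fun h => hac (Sym2.congr_right.mp h)
  have hebc : s(v,b) ≠ s(v,c) := fun h => hbc (Sym2.congr_right.mp h)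
  -- not reachable facts
  have hnb : ¬ (T.deleteEdges {s(v,b)}).Reachable b v :=
    fun h => LOaux.not_reach_del hacyc hb h.symm
  have hnc : ¬ (T.deleteEdges {s(v,c)}).Reachable c v :=
    fun h => LOaux.not_reach_del hacyc hc h.symm
  -- forward cover
  have hcover : ∀ w, (T.deleteEdges {s(v,a)}).Reachable v w →
      w = v ∨ (T.deleteEdges {s(v,b)}).Reachable b w ∨ (T.deleteEdges {s(v,c)}).Reachable c w := by
    intro w hw
    have hclosed : ∀ x y, (T.deleteEdges {s(v,a)}).Adj x y →
        x ∈ {z | z = v ∨ (T.deleteEdges {s(v,b)}).Reachable b z ∨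
          (T.deleteEdges {s(v,c)}).Reachable c z} →
        y ∈ {z | z = v ∨ (T.deleteEdges {s(v,b)}).Reachable b z ∨
          (T.deleteEdges {s(v,c)}).Reachable c z} := by
      intro x y hxy hx
      rw [SimpleGraph.deleteEdges_adj, Set.mem_singleton_iff] at hxy
      rcases hx with rfl | hx | hx
      · -- x = v : y is a neighbor of v
        have hy : y ∈ T.neighborFinset x := by
          rw [SimpleGraph.mem_neighborFinset]; exact hxy.1
        rw [hnbr] at hy
        simp only [Finset.mem_insert, Finset.mem_singleton] at hy
        rcases hy with rfl | rfl | rfl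
        · exact absurd rfl hxy.2
        · exact Or.inr (Or.inl (SimpleGraph.Reachable.refl _))
        · exact Or.inr (Or.inr (SimpleGraph.Reachable.refl _))
      · -- x on b-side
        by_cases hyv : y = v
        · exact Or.inl hyv
        by_cases heb : s(x,y) = s(v,b)
        · rw [Sym2.eq_iff] at heb
          rcases heb with ⟨rfl, rfl⟩ | ⟨rfl, rfl⟩
          · exact absurd hx hnb
          · exact Or.inl rfl
        · refine Or.inr (Or.inl (hx.trans (SimpleGraph.Adj.reachable ?_)))
          rw [SimpleGraph.deleteEdges_adj]
          exact ⟨hxy.1, by simpa using heb⟩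
      · -- x on c-side
        by_cases hyv : y = v
        · exact Or.inl hyv
        by_cases heb : s(x,y) = s(v,c)
        · rw [Sym2.eq_iff] at heb
          rcases heb with ⟨rfl, rfl⟩ | ⟨rfl, rfl⟩
          · exact absurd hx hnc
          · exact Or.inl rfl
        · refine Or.inr (Or.inr (hx.trans (SimpleGraph.Adj.reachable ?_)))
          rw [SimpleGraph.deleteEdges_adj]
          exact ⟨hxy.1, by simpa using heb⟩
    exact LOaux.reach_mem_closed hclosed hw (Or.inl rfl)
  -- backward inclusions
  have hbackb : ∀ w, (T.deleteEdges {s(v,b)}).Reachable b w →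
      (T.deleteEdges {s(v,a)}).Reachable v w := by
    intro w hw
    have h1 : (T.deleteEdges {s(v,a)}).Reachable b w :=
      reach_transfer hacyc hb hw s(v,a) (Sym2.mem_mk_left v a)
    have h2 : (T.deleteEdges {s(v,a)}).Adj v b := by
      rw [SimpleGraph.deleteEdges_adj]
      refine ⟨hb, ?_⟩
      simp only [Set.mem_singleton_iff]
      exact fun h => heab h.symm
    exact h2.reachable.trans h1
  have hbackc : ∀ w, (T.deleteEdges {s(v,c)}).Reachable c w →
      (T.deleteEdges {s(v,a)}).Reachable v w := by
    intro w hw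
    have h1 : (T.deleteEdges {s(v,a)}).Reachable c w :=
      reach_transfer hacyc hc hw s(v,a) (Sym2.mem_mk_left v a)
    have h2 : (T.deleteEdges {s(v,a)}).Adj v c := by
      rw [SimpleGraph.deleteEdges_adj]
      refine ⟨hc, ?_⟩
      simp only [Set.mem_singleton_iff]
      exact fun h => heac h.symm
    exact h2.reachable.trans h1
  -- disjointness of the b-side and c-side
  have hdisjbc : ∀ w, (T.deleteEdges {s(v,b)}).Reachable b w →
      (T.deleteEdges {s(v,c)}).Reachable c w → False := by
    intro w hwb hwc
    have h1 : (T.deleteEdges {s(v,c)}).Reachable b w :=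
      reach_transfer hacyc hb hwb s(v,c) (Sym2.mem_mk_left v c)
    have h2 : (T.deleteEdges {s(v,c)}).Adj v b := by
      rw [SimpleGraph.deleteEdges_adj]
      exact ⟨hb, by simpa using hebc⟩
    exact hnc ((hwc.trans h1.symm).trans h2.reachable.symm)
  -- now count
  have hset : (univ.filter (fun w => (T.deleteEdges {s(v,a)}).Reachable v w ∧ XLeaf T X w))
      = (univ.filter (fun w => (T.deleteEdges {s(v,b)}).Reachable b w ∧ XLeaf T X w))
        ∪ (univ.filter (fun w => (T.deleteEdges {s(v,c)}).Reachable c w ∧ XLeaf T X w)) := by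
    ext w
    simp only [Finset.mem_union, mem_filter, mem_univ, true_and]
    constructor
    · rintro ⟨hr, hP⟩
      rcases hcover w hr with rfl | h | h
      · exact absurd hP (hvnotX X)
      · exact Or.inl ⟨h, hP⟩
      · exact Or.inr ⟨h, hP⟩
    · rintro (⟨h, hP⟩ | ⟨h, hP⟩)
      · exact ⟨hbackb w h, hP⟩
      · exact ⟨hbackc w h, hP⟩
  have hdisj : Disjoint
      (univ.filter (fun w => (T.deleteEdges {s(v,b)}).Reachable b w ∧ XLeaf T X w))
      (univ.filter (fun w => (T.deleteEdges {s(v,c)}).Reachable c w ∧ XLeaf T X w)) := by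
    rw [Finset.disjoint_left]
    intro w hw1 hw2
    rw [mem_filter] at hw1 hw2
    exact hdisjbc w hw1.2.1 hw2.2.1
  rw [sideN, sideN, sideN, hset, Finset.card_union_of_disjoint hdisj]

end LOaux3

open Finset LOaux LOaux2 LOaux3
open scoped Classical


namespace LOaux4

lemma three_mem {α : Type*} [DecidableEq α] {s : Finset α} (h : s.card = 3) {v : α}
    (hv : v ∈ s) : ∃ b c, v ≠ b ∧ v ≠ c ∧ b ≠ c ∧ s = {v, b, c} := by
  obtain ⟨x, y, z, hxy, hxz, hyz, rfl⟩ := Finset.card_eq_three.mp h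
  simp only [Finset.mem_insert, Finset.mem_singleton] at hv
  rcases hv with rfl | rfl | rfl
  · exact ⟨y, z, hxy, hxz, hyz, rfl⟩
  · refine ⟨x, z, hxy.symm, hyz, hxz, ?_⟩
    ext w; simp only [Finset.mem_insert, Finset.mem_singleton]; tauto
  · refine ⟨x, y, hxz.symm, hyz.symm, hxy, ?_⟩
    ext w; simp only [Finset.mem_insert, Finset.mem_singleton]; tauto

lemma erase3a {α : Type*} [DecidableEq α] {a b c : α} (hab : a ≠ b) (hac : a ≠ c)
    (hbc : b ≠ c) : ({a, b, c} : Finset α).erase a = {b, c} := by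
  rw [show ({a, b, c} : Finset α) = insert a {b, c} from rfl,
    Finset.erase_insert (by simp [hab, hac])]

lemma erase3b {α : Type*} [DecidableEq α] {a b c : α} (hab : a ≠ b) (hac : a ≠ c)
    (hbc : b ≠ c) : ({a, b, c} : Finset α).erase b = {a, c} := by
  ext x
  simp only [Finset.mem_erase, Finset.mem_insert, Finset.mem_singleton]
  constructor
  · rintro ⟨hx, rfl | rfl | rfl⟩
    · exact Or.inl rfl
    · exact absurd rfl hx
    · exact Or.inr rfl
  · rintro (rfl | rfl)
    · exact ⟨hab, Or.inl rfl⟩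
    · exact ⟨hbc.symm, Or.inr (Or.inr rfl)⟩

lemma erase3c {α : Type*} [DecidableEq α] {a b c : α} (hab : a ≠ b) (hac : a ≠ c)
    (hbc : b ≠ c) : ({a, b, c} : Finset α).erase c = {a, b} := by
  ext x
  simp only [Finset.mem_erase, Finset.mem_insert, Finset.mem_singleton]
  constructor
  · rintro ⟨hx, rfl | rfl | rfl⟩
    · exact Or.inl rfl
    · exact Or.inr rfl
    · exact absurd rfl hx
  · rintro (rfl | rfl)
    · exact ⟨hac, Or.inl rfl⟩
    · exact ⟨hbc, Or.inr (Or.inl rfl)⟩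

lemma sum3 {α : Type*} [DecidableEq α] (w : α → ℝ) {a b c : α} (hab : a ≠ b) (hac : a ≠ c)
    (hbc : b ≠ c) : ∑ f ∈ ({a, b, c} : Finset α), w f = w a + w b + w c := by
  rw [Finset.sum_insert (by simp [hab, hac]), Finset.sum_insert (by simp [hbc]),
    Finset.sum_singleton, add_assoc]

lemma sum2 {α : Type*} [DecidableEq α] (w : α → ℝ) {a b : α} (hab : a ≠ b) :
    ∑ f ∈ ({a, b} : Finset α), w f = w a + w b := by
  rw [Finset.sum_insert (by simp [hab]), Finset.sum_singleton]

/-- Clause 2 of `memP` made explicit for a three-element incidence set. -/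
lemma clause2_iff {α : Type*} [DecidableEq α] (w : α → ℝ) {a b c : α} (hab : a ≠ b)
    (hac : a ≠ c) (hbc : b ≠ c) :
    ((∀ f ∈ ({a, b, c} : Finset α), w f ≤ ∑ g ∈ ({a, b, c} : Finset α).erase f, w g) ∧
      ∑ f ∈ ({a, b, c} : Finset α), w f ≤ 1) ↔
    (w a ≤ w b + w c ∧ w b ≤ w a + w c ∧ w c ≤ w a + w b ∧ w a + w b + w c ≤ 1) := by
  rw [sum3 w hab hac hbc]
  constructor
  · rintro ⟨h1, h2⟩
    refine ⟨?_, ?_, ?_, h2⟩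
    · have := h1 a (by simp)
      rwa [erase3a hab hac hbc, sum2 w hbc] at this
    · have := h1 b (by simp)
      rwa [erase3b hab hac hbc, sum2 w hac] at this
    · have := h1 c (by simp)
      rwa [erase3c hab hac hbc, sum2 w hab] at this
  · rintro ⟨h1, h2, h3, h4⟩
    refine ⟨?_, h4⟩
    intro f hf
    simp only [Finset.mem_insert, Finset.mem_singleton] at hf
    rcases hf with rfl | rfl | rfl
    · rwa [erase3a hab hac hbc, sum2 w hbc]
    · rwa [erase3b hab hac hbc, sum2 w hac]
    · rwa [erase3c hab hac hbc, sum2 w hab]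

variable {V : Type*} [Fintype V] [DecidableEq V] {T : SimpleGraph V} [DecidableRel T.Adj]

lemma incidence_eq {v a b c : V} (hnbr : T.neighborFinset v = {a, b, c}) :
    T.incidenceFinset v = {s(v,a), s(v,b), s(v,c)} := by
  have hadj : ∀ x ∈ ({a,b,c} : Finset V), T.Adj v x := by
    intro x hx
    rw [← hnbr, SimpleGraph.mem_neighborFinset] at hx
    exact hx
  ext e
  rw [SimpleGraph.mem_incidenceFinset]
  constructor
  · rintro ⟨heE, hve⟩
    obtain ⟨u', rfl⟩ := Sym2.mem_iff_exists.mp hve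
    have : u' ∈ T.neighborFinset v := by
      rw [SimpleGraph.mem_neighborFinset]
      exact T.mem_edgeSet.mp heE
    rw [hnbr] at this
    simp only [Finset.mem_insert, Finset.mem_singleton] at this ⊢
    rcases this with rfl | rfl | rfl
    · exact Or.inl rfl
    · exact Or.inr (Or.inl rfl)
    · exact Or.inr (Or.inr rfl)
  · intro he
    simp only [Finset.mem_insert, Finset.mem_singleton] at he
    rcases he with rfl | rfl | rfl
    · exact ⟨T.mem_edgeSet.mpr (hadj a (by simp)), Sym2.mem_mk_left _ _⟩
    · exact ⟨T.mem_edgeSet.mpr (hadj b (by simp)), Sym2.mem_mk_left _ _⟩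
    · exact ⟨T.mem_edgeSet.mpr (hadj c (by simp)), Sym2.mem_mk_left _ _⟩

/-- The canonical point of the polytope. -/
def thePt (T : SimpleGraph V) [DecidableRel T.Adj] (X : Finset (Sym2 V)) : Sym2 V → ℝ :=
  fun e => if e ∈ T.edgeFinset ∧ ∀ u ∈ e, Odd (sideN T X u e) then 1/2 else 0

lemma thePt_eq (hconn : T.Connected) (hacyc : T.IsAcyclic) {X : Finset (Sym2 V)}
    (htot : Even (totalN T X)) {u v : V} (h : T.Adj u v) :
    thePt T X s(u,v) = if Odd (sideN T X u s(u,v)) then 1/2 else 0 := by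
  have hmem : s(u,v) ∈ T.edgeFinset := SimpleGraph.mem_edgeFinset.mpr (T.mem_edgeSet.mpr h)
  have hsum := sideN_add hconn hacyc h X
  have hparity : Odd (sideN T X u s(u,v)) ↔ Odd (sideN T X v s(u,v)) := by
    rw [← hsum] at htot
    rw [← Nat.not_even_iff_odd, ← Nat.not_even_iff_odd, not_iff_not]
    exact (Nat.even_add.mp htot)
  have hiff : (∀ w ∈ s(u,v), Odd (sideN T X w s(u,v))) ↔ Odd (sideN T X u s(u,v)) := by
    constructor
    · intro hall
      exact hall u (Sym2.mem_mk_left u v)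
    · intro hu w hw
      rcases Sym2.mem_iff.mp hw with rfl | rfl
      · exact hu
      · exact hparity.mp hu
  rw [thePt]
  by_cases ho : Odd (sideN T X u s(u,v))
  · rw [if_pos ⟨hmem, hiff.mpr ho⟩, if_pos ho]
  · rw [if_neg (fun hc => ho (hiff.mp hc.2)), if_neg ho]

lemma thePt_vals (T : SimpleGraph V) [DecidableRel T.Adj] (X : Finset (Sym2 V)) (e : Sym2 V) :
    thePt T X e = 0 ∨ thePt T X e = 1/2 := by
  rw [thePt]
  split <;> simp

lemma thePt_not_edge (T : SimpleGraph V) [DecidableRel T.Adj] (X : Finset (Sym2 V))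
    {e : Sym2 V} (he : e ∉ T.edgeSet) : thePt T X e = 0 := by
  rw [thePt, if_neg]
  rintro ⟨h1, -⟩
  exact he (SimpleGraph.mem_edgeFinset.mp h1)

lemma thePt_leaf (hconn : T.Connected) (hacyc : T.IsAcyclic) {X : Finset (Sym2 V)}
    (hX : X ⊆ T.edgeFinset) (htot : Even (totalN T X)) {e : Sym2 V}
    (he : e ∈ leafEdges' T) : thePt T X e = if e ∈ X then 1/2 else 0 := by
  rw [leafEdges', mem_filter] at he
  obtain ⟨heE, u, hue, hu1⟩ := he
  obtain ⟨v, rfl⟩ := Sym2.mem_iff_exists.mp hue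
  have hadj : T.Adj u v := T.mem_edgeSet.mp (SimpleGraph.mem_edgeFinset.mp heE)
  rw [thePt_eq hconn hacyc htot hadj, sideN_leaf hu1 hadj hX]
  by_cases hx : s(u,v) ∈ X <;> simp [hx]

end LOaux4

open Finset LOaux LOaux2 LOaux3 LOaux4
open scoped Classical


namespace LOaux5

variable {V : Type*} [Fintype V] [DecidableEq V] {T : SimpleGraph V} [DecidableRel T.Adj]

lemma deg3_structure {v : V} (h3 : T.degree v = 3) :
    ∃ a b c : V, a ≠ b ∧ a ≠ c ∧ b ≠ c ∧ T.neighborFinset v = {a, b, c} ∧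
      T.Adj v a ∧ T.Adj v b ∧ T.Adj v c := by
  have hcard : (T.neighborFinset v).card = 3 := h3
  obtain ⟨a, b, c, hab, hac, hbc, hs⟩ := Finset.card_eq_three.mp hcard
  refine ⟨a, b, c, hab, hac, hbc, hs, ?_, ?_, ?_⟩ <;>
    rw [← SimpleGraph.mem_neighborFinset, hs] <;> simp

lemma parity3 (hconn : T.Connected) (hacyc : T.IsAcyclic) {v a b c : V}
    (ha : T.Adj v a) (hb : T.Adj v b) (hc : T.Adj v c)
    (hab : a ≠ b) (hac : a ≠ c) (hbc : b ≠ c)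
    (hnbr : T.neighborFinset v = {a, b, c}) {X : Finset (Sym2 V)}
    (htot : Even (totalN T X)) :
    Even (sideN T X a s(v,a) + sideN T X b s(v,b) + sideN T X c s(v,c)) := by
  have h1 := sideN_add hconn hacyc ha X
  have h2 := sideN_vertex hconn hacyc ha hb hc hab hac hbc hnbr X
  obtain ⟨k, hk⟩ := htot
  exact ⟨k, by omega⟩

lemma thePt_at (hconn : T.Connected) (hacyc : T.IsAcyclic) {X : Finset (Sym2 V)}
    (htot : Even (totalN T X)) {v a : V} (ha : T.Adj v a) :
    thePt T X s(v,a) = if Odd (sideN T X a s(v,a)) then 1/2 else 0 := by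
  rw [show s(v,a) = s(a,v) from Sym2.eq_swap]
  exact thePt_eq hconn hacyc htot ha.symm

/-- `thePt` satisfies the constraints of `memP`. -/
lemma thePt_memP (hconn : T.Connected) (hacyc : T.IsAcyclic) {X : Finset (Sym2 V)}
    (htot : Even (totalN T X)) :
    (∀ e, e ∉ T.edgeSet → thePt T X e = 0) ∧
    (∀ v : V, T.degree v = 3 →
      (∀ a ∈ T.incidenceFinset v,
        thePt T X a ≤ ∑ b ∈ (T.incidenceFinset v).erase a, thePt T X b) ∧
      ∑ a ∈ T.incidenceFinset v, thePt T X a ≤ 1) ∧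
    (∀ e ∈ T.edgeSet, (∀ v ∈ e, T.degree v = 1) → 0 ≤ thePt T X e ∧ thePt T X e ≤ 1 / 2) := by
  refine ⟨fun e he => thePt_not_edge T X he, ?_, ?_⟩
  · intro v h3
    obtain ⟨a, b, c, hab, hac, hbc, hnbr, ha, hb, hc⟩ := deg3_structure h3
    have heab : s(v,a) ≠ s(v,b) := fun h => hab (Sym2.congr_right.mp h)
    have heac : s(v,a) ≠ s(v,c) := fun h => hac (Sym2.congr_right.mp h)
    have hebc : s(v,b) ≠ s(v,c) := fun h => hbc (Sym2.congr_right.mp h)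
    rw [incidence_eq hnbr, clause2_iff _ heab heac hebc]
    have hpar := parity3 hconn hacyc ha hb hc hab hac hbc hnbr htot
    rw [thePt_at hconn hacyc htot ha, thePt_at hconn hacyc htot hb,
      thePt_at hconn hacyc htot hc]
    rcases Nat.even_or_odd (sideN T X a s(v,a)) with hpa | hpa <;>
      rcases Nat.even_or_odd (sideN T X b s(v,b)) with hpb | hpb <;>
      rcases Nat.even_or_odd (sideN T X c s(v,c)) with hpc | hpc <;>
      simp only [Nat.even_iff, Nat.odd_iff] at hpa hpb hpc hpar <;>
      first
        | (exfalso; omega)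
        | (simp only [Nat.odd_iff, hpa, hpb, hpc]; norm_num)
  · intro e _ _
    rcases thePt_vals T X e with h | h <;> rw [h] <;> norm_num

lemma side_lt (hacyc : T.IsAcyclic) {u v p : V} (h : T.Adj u v) (hp : T.Adj u p)
    (hvp : v ≠ p) :
    (univ.filter (fun w => (T.deleteEdges {s(u,p)}).Reachable p w)).card <
    (univ.filter (fun w => (T.deleteEdges {s(u,v)}).Reachable u w)).card := by
  have hnu : u ∉ univ.filter (fun w => (T.deleteEdges {s(u,p)}).Reachable p w) := by
    rw [mem_filter]
    rintro ⟨-, hr⟩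
    exact LOaux.not_reach_del hacyc hp hr.symm
  have hsub : insert u (univ.filter (fun w => (T.deleteEdges {s(u,p)}).Reachable p w))
      ⊆ univ.filter (fun w => (T.deleteEdges {s(u,v)}).Reachable u w) := by
    intro w hw
    rw [Finset.mem_insert] at hw
    rw [mem_filter]
    rcases hw with rfl | hw
    · exact ⟨mem_univ _, SimpleGraph.Reachable.refl _⟩
    · rw [mem_filter] at hw
      have h1 : (T.deleteEdges {s(u,v)}).Reachable p w :=
        reach_transfer hacyc hp hw.2 s(u,v) (Sym2.mem_mk_left u v)
      have h2 : (T.deleteEdges {s(u,v)}).Adj u p := by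
        rw [SimpleGraph.deleteEdges_adj]
        refine ⟨hp, ?_⟩
        simp only [Set.mem_singleton_iff]
        intro hcon
        exact hvp (Sym2.congr_right.mp hcon.symm)
      exact ⟨mem_univ _, h2.reachable.trans h1⟩
  calc _ < (insert u (univ.filter (fun w => (T.deleteEdges {s(u,p)}).Reachable p w))).card := by
        rw [Finset.card_insert_of_notMem hnu]; omega
    _ ≤ _ := Finset.card_le_card hsub

/-- Main uniqueness induction. -/
lemma unique_aux (hconn : T.Connected) (hacyc : T.IsAcyclic)
    (hdeg : ∀ v : V, T.degree v = 1 ∨ T.degree v = 3)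
    {X : Finset (Sym2 V)} (hX : X ⊆ leafEdges' T) (htot : Even (totalN T X))
    (y : Sym2 V → ℝ)
    (hy2 : ∀ v : V, T.degree v = 3 →
      (∀ a ∈ T.incidenceFinset v, y a ≤ ∑ b ∈ (T.incidenceFinset v).erase a, y b) ∧
      ∑ a ∈ T.incidenceFinset v, y a ≤ 1)
    (hyX : ∀ e ∈ X, y e = 1 / 2) (hyX' : ∀ e ∈ leafEdges' T \ X, y e = 0) :
    ∀ n : ℕ, ∀ u v : V, T.Adj u v →
      (univ.filter (fun w => (T.deleteEdges {s(u,v)}).Reachable u w)).card ≤ n →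
      y s(u,v) = thePt T X s(u,v) := by
  intro n
  induction n with
  | zero =>
    intro u v h hcard
    exfalso
    have : u ∈ univ.filter (fun w => (T.deleteEdges {s(u,v)}).Reachable u w) :=
      mem_filter.mpr ⟨mem_univ _, SimpleGraph.Reachable.refl _⟩
    have := Finset.card_pos.mpr ⟨u, this⟩
    omega
  | succ n ih =>
    intro u v h hcard
    rcases hdeg u with h1 | h3
    · -- u is a leaf, so s(u,v) is a leaf edge
      have hle : s(u,v) ∈ leafEdges' T := by
        rw [leafEdges', mem_filter]
        exact ⟨SimpleGraph.mem_edgeFinset.mpr (T.mem_edgeSet.mpr h),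
          u, Sym2.mem_mk_left u v, h1⟩
      rw [thePt_leaf hconn hacyc (fun f hf => (mem_filter.mp (hX hf)).1) htot hle]
      by_cases hx : s(u,v) ∈ X
      · rw [if_pos hx]; exact hyX _ hx
      · rw [if_neg hx]; exact hyX' _ (Finset.mem_sdiff.mpr ⟨hle, hx⟩)
    · -- u has degree 3
      have hvmem : v ∈ T.neighborFinset u := by
        rw [SimpleGraph.mem_neighborFinset]; exact h
      have hcard3 : (T.neighborFinset u).card = 3 := h3
      obtain ⟨p, q, hvp, hvq, hpq, hnbr⟩ := three_mem hcard3 hvmem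
      have hp : T.Adj u p := by
        rw [← SimpleGraph.mem_neighborFinset, hnbr]; simp
      have hq : T.Adj u q := by
        rw [← SimpleGraph.mem_neighborFinset, hnbr]; simp
      -- apply the induction hypothesis to the two other edges at u
      have hyp : y s(u,p) = thePt T X s(u,p) := by
        have h1 := side_lt hacyc h hp hvp
        have := ih p u hp.symm (by
          rw [show s(p,u) = s(u,p) from Sym2.eq_swap]
          omega)
        rwa [show s(p,u) = s(u,p) from Sym2.eq_swap] at this
      have hyq : y s(u,q) = thePt T X s(u,q) := by
        have h1 := side_lt hacyc h hq hvq
        have := ih q u hq.symm (by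
          rw [show s(q,u) = s(u,q) from Sym2.eq_swap]
          omega)
        rwa [show s(q,u) = s(u,q) from Sym2.eq_swap] at this
      -- the degree-3 constraints at u
      have heab : s(u,v) ≠ s(u,p) := fun hh => hvp (Sym2.congr_right.mp hh)
      have heac : s(u,v) ≠ s(u,q) := fun hh => hvq (Sym2.congr_right.mp hh)
      have hebc : s(u,p) ≠ s(u,q) := fun hh => hpq (Sym2.congr_right.mp hh)
      have hcons := hy2 u h3
      rw [incidence_eq hnbr, clause2_iff _ heab heac hebc] at hcons
      obtain ⟨hc1, hc2, hc3, hc4⟩ := hcons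
      -- parity relation
      have hpar : sideN T X u s(u,v) = sideN T X p s(u,p) + sideN T X q s(u,q) :=
        sideN_vertex hconn hacyc h hp hq hvp hvq hpq hnbr X
      -- compute thePt values
      have hptv : thePt T X s(u,v) = if Odd (sideN T X u s(u,v)) then (1:ℝ)/2 else 0 :=
        thePt_eq hconn hacyc htot h
      have hptp : thePt T X s(u,p) = if Odd (sideN T X p s(u,p)) then (1:ℝ)/2 else 0 :=
        thePt_at hconn hacyc htot hp
      have hptq : thePt T X s(u,q) = if Odd (sideN T X q s(u,q)) then (1:ℝ)/2 else 0 :=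
        thePt_at hconn hacyc htot hq
      rw [hyp, hptp] at hc1 hc2 hc3 hc4
      rw [hyq, hptq] at hc1 hc2 hc3 hc4
      rw [hptv, hpar]
      rcases Nat.even_or_odd (sideN T X p s(u,p)) with hop | hop <;>
        rcases Nat.even_or_odd (sideN T X q s(u,q)) with hoq | hoq
      · have he : ¬ Odd (sideN T X p s(u,p) + sideN T X q s(u,q)) := by
          simp only [Nat.even_iff, Nat.odd_iff] at hop hoq ⊢; omega
        rw [if_neg he]
        have hop' : ¬ Odd (sideN T X p s(u,p)) := by
          simp only [Nat.odd_iff, Nat.even_iff] at hop ⊢; omega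
        have hoq' : ¬ Odd (sideN T X q s(u,q)) := by
          simp only [Nat.odd_iff, Nat.even_iff] at hoq ⊢; omega
        rw [if_neg hop', if_neg hoq'] at hc1 hc2
        linarith
      · have he : Odd (sideN T X p s(u,p) + sideN T X q s(u,q)) := by
          simp only [Nat.even_iff, Nat.odd_iff] at hop hoq ⊢; omega
        rw [if_pos he]
        have hop' : ¬ Odd (sideN T X p s(u,p)) := by
          simp only [Nat.odd_iff, Nat.even_iff] at hop ⊢; omega
        rw [if_neg hop', if_pos hoq] at hc1 hc3
        linarith
      · have he : Odd (sideN T X p s(u,p) + sideN T X q s(u,q)) := by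
          simp only [Nat.even_iff, Nat.odd_iff] at hop hoq ⊢; omega
        rw [if_pos he]
        have hoq' : ¬ Odd (sideN T X q s(u,q)) := by
          simp only [Nat.odd_iff, Nat.even_iff] at hoq ⊢; omega
        rw [if_pos hop, if_neg hoq'] at hc1 hc2
        linarith
      · have he : ¬ Odd (sideN T X p s(u,p) + sideN T X q s(u,q)) := by
          simp only [Nat.even_iff, Nat.odd_iff] at hop hoq ⊢; omega
        rw [if_neg he]
        rw [if_pos hop, if_pos hoq] at hc2 hc4
        linarith

end LOaux5

open Finset LOaux LOaux2 LOaux3 LOaux4 LOaux5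
open scoped Classical


namespace LOaux6

variable {V : Type*} [Fintype V] [DecidableEq V] {T : SimpleGraph V} [DecidableRel T.Adj]

lemma eq_thePt (hconn : T.Connected) (hacyc : T.IsAcyclic)
    (hdeg : ∀ v : V, T.degree v = 1 ∨ T.degree v = 3)
    {X : Finset (Sym2 V)} (hX : X ⊆ leafEdges' T) (htot : Even (totalN T X))
    (y : Sym2 V → ℝ)
    (hy0 : ∀ e, e ∉ T.edgeSet → y e = 0)
    (hy2 : ∀ v : V, T.degree v = 3 →
      (∀ a ∈ T.incidenceFinset v, y a ≤ ∑ b ∈ (T.incidenceFinset v).erase a, y b) ∧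
      ∑ a ∈ T.incidenceFinset v, y a ≤ 1)
    (hyX : ∀ e ∈ X, y e = 1 / 2) (hyX' : ∀ e ∈ leafEdges' T \ X, y e = 0) :
    y = thePt T X := by
  funext e
  by_cases he : e ∈ T.edgeSet
  · revert he
    induction e with
    | _ u v =>
      intro he
      exact unique_aux hconn hacyc hdeg hX htot y hy2 hyX hyX'
        (univ.filter (fun w => (T.deleteEdges {s(u,v)}).Reachable u w)).card u v
        (T.mem_edgeSet.mp he) le_rfl
  · rw [hy0 e he, thePt_not_edge T X he]

lemma thePt_support (hconn : T.Connected) (hacyc : T.IsAcyclic) {X : Finset (Sym2 V)}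
    (htot : Even (totalN T X)) :
    ∃ H : Finset (Sym2 V), (H ⊆ T.edgeFinset ∧ ∀ v : V, T.degree v = 3 →
      ((H.filter (fun e => v ∈ e)).card = 0 ∨ (H.filter (fun e => v ∈ e)).card = 2)) ∧
    ∀ e, thePt T X e ≠ 0 ↔ e ∈ H := by
  refine ⟨T.edgeFinset.filter (fun e => thePt T X e ≠ 0),
    ⟨Finset.filter_subset _ _, ?_⟩, ?_⟩
  · intro v h3
    obtain ⟨a, b, c, hab, hac, hbc, hnbr, ha, hb, hc⟩ := deg3_structure h3
    have heab : s(v,a) ≠ s(v,b) := fun h => hab (Sym2.congr_right.mp h)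
    have heac : s(v,a) ≠ s(v,c) := fun h => hac (Sym2.congr_right.mp h)
    have hebc : s(v,b) ≠ s(v,c) := fun h => hbc (Sym2.congr_right.mp h)
    have hfe : (T.edgeFinset.filter (fun e => thePt T X e ≠ 0)).filter (fun e => v ∈ e)
        = ({s(v,a), s(v,b), s(v,c)} : Finset (Sym2 V)).filter (fun e => thePt T X e ≠ 0) := by
      rw [← incidence_eq hnbr]
      ext e
      simp only [mem_filter, SimpleGraph.mem_incidenceFinset, SimpleGraph.mem_edgeFinset]
      constructor
      · rintro ⟨⟨h1, h2⟩, h3'⟩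
        exact ⟨⟨h1, h3'⟩, h2⟩
      · rintro ⟨⟨h1, h2⟩, h3'⟩
        exact ⟨⟨h1, h3'⟩, h2⟩
    rw [hfe]
    have hiff : ∀ (x : V) (hx : T.Adj v x),
        (thePt T X s(v,x) ≠ 0) ↔ Odd (sideN T X x s(v,x)) := by
      intro x hx
      rw [thePt_at hconn hacyc htot hx]
      split
      · norm_num; assumption
      · norm_num
        rename_i hno
        simp only [Nat.even_iff]
        simp only [Nat.odd_iff] at hno
        omega
    have hva := hiff a ha
    have hvb := hiff b hb
    have hvc := hiff c hc
    have hpar := parity3 hconn hacyc ha hb hc hab hac hbc hnbr htot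
    rw [Finset.card_filter, Finset.sum_insert (by simp [heab, heac]),
      Finset.sum_insert (by simp [hebc]), Finset.sum_singleton]
    rw [if_congr hva rfl rfl, if_congr hvb rfl rfl, if_congr hvc rfl rfl]
    by_cases h1 : Odd (sideN T X a s(v,a)) <;>
      by_cases h2 : Odd (sideN T X b s(v,b)) <;>
      by_cases h3' : Odd (sideN T X c s(v,c)) <;>
      simp only [h1, h2, h3', if_true, if_false, if_pos, if_neg, not_false_iff] <;>
      simp only [Nat.even_iff, Nat.odd_iff] at h1 h2 h3' hpar <;>
      omega
  · intro e
    rw [mem_filter]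
    constructor
    · intro hne
      refine ⟨?_, hne⟩
      by_contra hc
      exact hne (thePt_not_edge T X (fun h => hc (SimpleGraph.mem_edgeFinset.mpr h)))
    · rintro ⟨-, h⟩
      exact h

end LOaux6

/-- Lemma 2.2: for a `{1,3}`-tree `T` and an even set `X` of leaf-edges, there is a unique
point `x ∈ P_T` with `x_e = 1/2` on `X` and `x_e = 0` on the remaining leaf-edges; moreover
any such point has all coordinates in `{0, 1/2}` and its support is the edge set of a
collection of disjoint leaf-paths. -/
theorem stmt5 {V : Type*} [Fintype V] [DecidableEq V] (T : SimpleGraph V)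
    [DecidableRel T.Adj] (hconn : T.Connected) (hacyc : T.IsAcyclic)
    (hdeg : ∀ v : V, T.degree v = 1 ∨ T.degree v = 3)
    (X : Finset (Sym2 V)) (hX : X ⊆ leafEdges T) (hXeven : Even X.card) :
    (∃! x : Sym2 V → ℝ, memP T x ∧ (∀ e ∈ X, x e = 1 / 2) ∧
        (∀ e ∈ leafEdges T \ X, x e = 0)) ∧
    (∀ x : Sym2 V → ℝ, memP T x → (∀ e ∈ X, x e = 1 / 2) →
        (∀ e ∈ leafEdges T \ X, x e = 0) →
      (∀ e, x e = 0 ∨ x e = 1 / 2) ∧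
      ∃ H : Finset (Sym2 V), isLeafPathCollection T H ∧ ∀ e, x e ≠ 0 ↔ e ∈ H) := by
  classical
  have hX' : X ⊆ LOaux2.leafEdges' T := hX
  have htot : Even (LOaux2.totalN T X) := LOaux2.totalN_even hconn hX' hXeven
  have hXe : X ⊆ T.edgeFinset := fun f hf => (Finset.mem_filter.mp (hX' hf)).1
  have hmemPt : memP T (LOaux4.thePt T X) := LOaux5.thePt_memP hconn hacyc htot
  have hXpt : ∀ e ∈ X, LOaux4.thePt T X e = 1 / 2 := by
    intro e he
    rw [LOaux4.thePt_leaf hconn hacyc hXe htot (hX' he), if_pos he]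
  have hX'pt : ∀ e ∈ leafEdges T \ X, LOaux4.thePt T X e = 0 := by
    intro e he
    obtain ⟨h1, h2⟩ := Finset.mem_sdiff.mp he
    have h1' : e ∈ LOaux2.leafEdges' T := h1
    rw [LOaux4.thePt_leaf hconn hacyc hXe htot h1', if_neg h2]
  have huniq : ∀ y : Sym2 V → ℝ, memP T y → (∀ e ∈ X, y e = 1 / 2) →
      (∀ e ∈ leafEdges T \ X, y e = 0) → y = LOaux4.thePt T X := by
    intro y hy hyX hyX'
    obtain ⟨hy0, hy2, hy3⟩ := hy
    exact LOaux6.eq_thePt hconn hacyc hdeg hX' htot y hy0 hy2 hyX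
      (fun e he => hyX' e he)
  constructor
  · refine ⟨LOaux4.thePt T X, ⟨hmemPt, hXpt, hX'pt⟩, ?_⟩
    rintro y ⟨hy, hyX, hyX'⟩
    exact huniq y hy hyX hyX'
  · intro y hy hyX hyX'
    have hyeq : y = LOaux4.thePt T X := huniq y hy hyX hyX'
    constructor
    · intro e
      rw [hyeq]
      exact LOaux4.thePt_vals T X e
    · obtain ⟨H, hH1, hH2⟩ := LOaux6.thePt_support hconn hacyc htot
      refine ⟨H, ⟨hH1.1, hH1.2⟩, fun e => ?_⟩
      rw [hyeq]
      exact hH2 e
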